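/- arXiv:1511.04466 — 6 statements merged into one kernel-verified Lean document; each statement's English description precedes it below -/
import Mathlib

section
/- Any polynomial in |x₁|, …, |x_n| with nonnegative coefficients, i.e. a finite sum of terms c·|x₁|^{a₁}⋯|x_n|^{a_n} with c ≥ 0 and nonnegative integer exponents (not all zero per non-constant term), minus its constant term, is star-convex with star center at the origin. -/
theorem stmt8 (n : ℕ) {ι : Type*} (S : Finset ι) (c : ι → ℝ) (a : ι → Fin n → ℕ)
    (hc : ∀ i ∈ S, 0 ≤ c i) (ha : ∀ i ∈ S, ∃ j, a i j ≠ 0)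
    (f : (Fin n → ℝ) → ℝ)
    (hf : f = fun x => ∑ i ∈ S, c i * ∏ j, |x j| ^ (a i j)) :
    (∀ x, f 0 ≤ f x) ∧
      ∀ α ∈ Set.Icc (0:ℝ) 1, ∀ x,
        f ((1 - α) • x) ≤ (1 - α) * f x + α * f 0 := by
  subst hf
  have h0 : (∑ i ∈ S, c i * ∏ j, |(0 : Fin n → ℝ) j| ^ (a i j)) = 0 := by
    refine Finset.sum_eq_zero fun i hi => ?_
    obtain ⟨j, hj⟩ := ha i hi
    refine mul_eq_zero_of_right _ (Finset.prod_eq_zero (Finset.mem_univ j) ?_)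
    simp [zero_pow hj]
  have hnonneg : ∀ x : Fin n → ℝ, 0 ≤ ∑ i ∈ S, c i * ∏ j, |x j| ^ (a i j) := by
    intro x
    refine Finset.sum_nonneg fun i hi => mul_nonneg (hc i hi) ?_
    exact Finset.prod_nonneg fun j _ => pow_nonneg (abs_nonneg _) _
  constructor
  · intro x; simp only [h0]; exact hnonneg x
  · rintro α ⟨hα0, hα1⟩ x
    simp only [h0, mul_zero, add_zero, Finset.mul_sum]
    refine Finset.sum_le_sum fun i hi => ?_
    have h1 : 0 ≤ 1 - α := by linarith
    have h2 : 1 - α ≤ 1 := by linarith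
    have key : (∏ j, |((1 - α) • x) j| ^ (a i j))
        = (1 - α) ^ (∑ j, a i j) * ∏ j, |x j| ^ (a i j) := by
      rw [← Finset.prod_pow_eq_pow_sum, ← Finset.prod_mul_distrib]
      refine Finset.prod_congr rfl fun j _ => ?_
      rw [Pi.smul_apply, smul_eq_mul, abs_mul, mul_pow, abs_of_nonneg h1]
    rw [key]
    have hP : 0 ≤ ∏ j, |x j| ^ (a i j) :=
      Finset.prod_nonneg fun j _ => pow_nonneg (abs_nonneg _) _
    have hpow : (1 - α) ^ (∑ j, a i j) ≤ 1 - α := by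
      calc (1 - α) ^ (∑ j, a i j) ≤ (1 - α) ^ 1 := by
            refine pow_le_pow_of_le_one h1 h2 ?_
            obtain ⟨j, hj⟩ := ha i hi
            calc 1 ≤ a i j := Nat.one_le_iff_ne_zero.mpr hj
              _ ≤ ∑ j, a i j := Finset.single_le_sum (fun _ _ => Nat.zero_le _) (Finset.mem_univ j)
        _ = 1 - α := pow_one _
    nlinarith [mul_nonneg (mul_nonneg (sub_nonneg.mpr hpow) (hc i hi)) hP]
end

section
/- In ℝ^n (n ≥ 1), the ellipsoid E = { x : (x₁ - 2/(3(n+1)))² / (1 - 2/(3(n+1)))² + ((n²-1)/n²)·Σ_{i≠1} x_i² ≤ 1 } contains the intersection of the closed unit ball with the half-space { x : x₁ ≥ -1/(3n) }. -/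
lemma key10 (N t S : ℝ) (hN : 1 ≤ N) (hS : 0 ≤ S)
    (h1 : t ^ 2 + S ≤ 1) (h2 : -(1 / (3 * N)) ≤ t) :
    (t - 2 / (3 * (N + 1))) ^ 2 / (1 - 2 / (3 * (N + 1))) ^ 2
      + ((N ^ 2 - 1) / N ^ 2) * S ≤ 1 := by
  have hN0 : 0 < N := by linarith
  have hN1 : 0 < N + 1 := by linarith
  have h3 : 0 < 3 * N + 1 := by linarith
  have ht1 : t ≤ 1 := by nlinarith
  rw [← sub_nonneg]
  have e : 1 - ((t - 2 / (3 * (N + 1))) ^ 2 / (1 - 2 / (3 * (N + 1))) ^ 2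
      + ((N ^ 2 - 1) / N ^ 2) * S)
      = (N ^ 2 * (3 * N + 1) ^ 2 - N ^ 2 * (3 * (N + 1) * t - 2) ^ 2
        - (N ^ 2 - 1) * (3 * N + 1) ^ 2 * S) / (N ^ 2 * (3 * N + 1) ^ 2) := by
    have hk : (1 : ℝ) - 2 / (3 * (N + 1)) = (3 * N + 1) / (3 * (N + 1)) := by
      field_simp; ring
    rw [hk]
    field_simp
    ring
  rw [e]
  apply div_nonneg _ (by positivity)
  have h2' : (3 * N) * (-(1 / (3 * N))) = -1 := by field_simp
  have ht2 : 0 ≤ 3 * N * t + 1 := by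
    have := mul_le_mul_of_nonneg_left h2 (le_of_lt (by positivity : (0:ℝ) < 3 * N))
    rw [h2'] at this
    linarith
  have ht3 : 0 ≤ 1 - t := by linarith
  have hS'' : 0 ≤ (N ^ 2 - 1) * (1 - t ^ 2 - S) :=
    mul_nonneg (by nlinarith) (by linarith)
  nlinarith [mul_nonneg (mul_nonneg
      (by positivity : (0:ℝ) ≤ 2 * (N + 1) * (2 * N + 1)) ht3) ht2,
    mul_nonneg (by nlinarith : (0:ℝ) ≤ N ^ 2 - 1) (sq_nonneg (1 - t)),
    mul_nonneg hS'' (sq_nonneg (3 * N + 1))]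

theorem stmt10 (n : ℕ) (hn : 0 < n) (x : Fin n → ℝ)
    (hball : ∑ i, (x i) ^ 2 ≤ 1)
    (hcut : -(1 / (3 * n)) ≤ x ⟨0, hn⟩) :
    (x ⟨0, hn⟩ - 2 / (3 * (n + 1))) ^ 2 / (1 - 2 / (3 * (n + 1))) ^ 2
      + (((n : ℝ) ^ 2 - 1) / (n : ℝ) ^ 2)
        * ∑ i ∈ Finset.univ.filter (· ≠ (⟨0, hn⟩ : Fin n)), (x i) ^ 2 ≤ 1 := by
  have hN : (1 : ℝ) ≤ n := by exact_mod_cast hn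
  set S := ∑ i ∈ Finset.univ.filter (· ≠ (⟨0, hn⟩ : Fin n)), (x i) ^ 2 with hSdef
  have hS : 0 ≤ S := Finset.sum_nonneg fun i _ => sq_nonneg _
  have hsum : (x ⟨0, hn⟩) ^ 2 + S = ∑ i, (x i) ^ 2 := by
    rw [hSdef, Finset.filter_ne',
      Finset.add_sum_erase Finset.univ (fun i => (x i) ^ 2) (Finset.mem_univ _)]
  exact key10 n (x ⟨0, hn⟩) S hN hS (by linarith) hcut
end

section
/- For every integer n ≥ 1 and real x₁ ∈ [-1/(3n), 1], the quadratic f(x₁) = (x₁ - 2/(3(n+1)))²/(1 - 2/(3(n+1)))² + ((n²-1)/n²)·(1 - x₁²) satisfies f(x₁) ≤ 1. -/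
theorem stmt11 (n : ℕ) (hn : 1 ≤ n) (x : ℝ)
    (hx : x ∈ Set.Icc (-(1 / (3 * (n : ℝ)))) 1) :
    (x - 2 / (3 * ((n : ℝ) + 1))) ^ 2 / (1 - 2 / (3 * ((n : ℝ) + 1))) ^ 2
      + (((n : ℝ) ^ 2 - 1) / (n : ℝ) ^ 2) * (1 - x ^ 2) ≤ 1 := by
  obtain ⟨h1, h2⟩ := hx
  have hn1 : (1:ℝ) ≤ (n:ℝ) := by exact_mod_cast hn
  have hnpos : (0:ℝ) < n := by linarith
  have h3 : ((3:ℝ)*n+1) ≠ 0 := by positivity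
  have h4 : ((n:ℝ)+1) ≠ 0 := by positivity
  have h5 : (n:ℝ) ≠ 0 := by positivity
  have hx' : -(1:ℝ) ≤ 3*(n:ℝ)*x := by
    have := mul_le_mul_of_nonneg_left h1 (by positivity : (0:ℝ) ≤ 3*n)
    have h0 : 3*(n:ℝ) * (-(1/(3*n))) = -1 := by field_simp
    linarith [h0 ▸ this]
  have hnum : (0:ℝ) ≤ (1 - x) * ((12*(n:ℝ)^2+5*n+1)*x + (5*n+1)) := by
    apply mul_nonneg (by linarith)
    nlinarith [mul_nonneg (by linarith : (0:ℝ) ≤ 3*(n:ℝ)*x+1)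
        (by positivity : (0:ℝ) ≤ 12*(n:ℝ)^2+5*n+1),
      sq_nonneg ((n:ℝ)-1), hnpos, hn1]
  have hd : 1 - 2 / (3 * ((n : ℝ) + 1)) = (3*n+1)/(3*(n+1)) := by field_simp; ring
  rw [hd, ← sub_nonneg]
  have hfac : 1 - ((x - 2 / (3 * ((n : ℝ) + 1))) ^ 2 / ((3*(n:ℝ)+1)/(3*((n:ℝ)+1))) ^ 2
      + (((n : ℝ) ^ 2 - 1) / (n : ℝ) ^ 2) * (1 - x ^ 2))
      = ((n:ℝ)+1) * ((1 - x) * ((12*(n:ℝ)^2+5*n+1)*x + (5*n+1))) / ((3*(n:ℝ)+1)^2 * n^2) := by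
    field_simp
    ring
  rw [hfac]
  positivity
end

section
/- For every integer n ≥ 1, (1 - 2/(3(n+1))) · (n²/(n²-1))^{(n-1)/2} < e^{-1/(6(n+1))}. -/
theorem stmt12 (n : ℕ) (hn : 1 ≤ n) :
    (1 - 2 / (3 * ((n : ℝ) + 1)))
        * ((n : ℝ) ^ 2 / ((n : ℝ) ^ 2 - 1)) ^ (((n : ℝ) - 1) / 2)
      < Real.exp (-(1 / (6 * ((n : ℝ) + 1)))) := by
  rcases eq_or_lt_of_le hn with h1 | h2
  · -- n = 1
    have h1' : n = 1 := h1.symm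
    subst h1'
    have h0 : (((1:ℕ):ℝ) - 1) / 2 = 0 := by norm_num
    rw [h0, Real.rpow_zero, mul_one]
    have := Real.add_one_lt_exp (x := -(1 / (6 * (((1:ℕ):ℝ) + 1)))) (by norm_num)
    push_cast at this ⊢
    nlinarith [this]
  · -- n ≥ 2
    have ha : (2:ℝ) ≤ (n:ℝ) := by exact_mod_cast h2
    set a : ℝ := (n:ℝ) with ha'
    have h1 : (0:ℝ) < a ^ 2 - 1 := by nlinarith
    have h2' : (0:ℝ) < a + 1 := by nlinarith
    have hb : a ^ 2 / (a ^ 2 - 1) = 1 + 1 / (a ^ 2 - 1) := by field_simp; ring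
    have hble : a ^ 2 / (a ^ 2 - 1) ≤ Real.exp (1 / (a ^ 2 - 1)) := by
      rw [hb, add_comm]
      exact Real.add_one_le_exp _
    have hbnn : (0:ℝ) ≤ a ^ 2 / (a ^ 2 - 1) := by positivity
    have hexp : (0:ℝ) ≤ ((a:ℝ) - 1) / 2 := by nlinarith
    have hpow : (a ^ 2 / (a ^ 2 - 1)) ^ ((a - 1) / 2)
        ≤ Real.exp (1 / (a ^ 2 - 1) * ((a - 1) / 2)) := by
      rw [Real.exp_mul]
      exact Real.rpow_le_rpow hbnn hble hexp
    have ht : 1 - 2 / (3 * (a + 1)) < Real.exp (-(2 / (3 * (a + 1)))) := by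
      have hne : -(2 / (3 * (a + 1))) ≠ (0:ℝ) := by
        have : (0:ℝ) < 2 / (3 * (a + 1)) := by positivity
        linarith
      have := Real.add_one_lt_exp hne
      linarith
    have hpos : (0:ℝ) < 1 - 2 / (3 * (a + 1)) := by
      rw [sub_pos]
      rw [div_lt_one (by positivity)]
      linarith
    calc (1 - 2 / (3 * (a + 1))) * (a ^ 2 / (a ^ 2 - 1)) ^ ((a - 1) / 2)
        < Real.exp (-(2 / (3 * (a + 1)))) * Real.exp (1 / (a ^ 2 - 1) * ((a - 1) / 2)) := by
          apply mul_lt_mul ht hpow (Real.rpow_pos_of_pos (div_pos (by nlinarith) h1) _) (Real.exp_pos _).le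
      _ = Real.exp (-(2 / (3 * (a + 1))) + 1 / (a ^ 2 - 1) * ((a - 1) / 2)) := by
          rw [Real.exp_add]
      _ = Real.exp (-(1 / (6 * (a + 1)))) := by
          congr 1
          have hm : a - 1 ≠ 0 := by nlinarith
          have hsq : a ^ 2 - 1 = (a - 1) * (a + 1) := by ring
          rw [hsq]
          field_simp
          ring
end

section
/- Let c ≥ 0, n ≥ 1, and consider the probability distribution on (0,∞) with density proportional to f(x) = e^{-(x-c)²/2} x^{n-1}. Let m = (c + √(c² + 4(n-1)))/2 be the mode. Then f(x) ≤ f(m)·e^{-(x-m)²/2} for all x > 0, and f(x) ≥ f(m)·e^{-(x-m)²} for all x ≥ m. -/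
lemma lemA (t : ℝ) (ht : 0 ≤ t) (k : ℕ) : t ^ k ≤ Real.exp ((k : ℝ) * (t - 1)) := by
  calc t ^ k ≤ (Real.exp (t - 1)) ^ k := by
        apply pow_le_pow_left₀ ht
        linarith [Real.add_one_le_exp (t - 1)]
    _ = Real.exp ((k : ℝ) * (t - 1)) := by rw [← Real.exp_nat_mul]

lemma lemB (t : ℝ) (ht : 1 ≤ t) : (t - 1) * (3 - t) / 2 ≤ Real.log t := by
  have key : MonotoneOn (fun t : ℝ => Real.log t - (t - 1) * (3 - t) / 2) (Set.Ici 1) := by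
    apply monotoneOn_of_deriv_nonneg (convex_Ici 1)
    · apply ContinuousOn.sub
      · apply Real.continuousOn_log.mono
        intro x hx
        simp only [Set.mem_Ici] at hx
        simp only [Set.mem_compl_iff, Set.mem_singleton_iff]
        intro h; rw [h] at hx; linarith
      · fun_prop
    · intro x hx
      rw [interior_Ici] at hx
      have hx0 : x ≠ 0 := by intro h; rw [h] at hx; simp at hx; linarith
      apply DifferentiableAt.differentiableWithinAt
      exact (Real.differentiableAt_log hx0).sub (by fun_prop)
    · intro x hx
      rw [interior_Ici] at hx
      have hx0 : (0:ℝ) < x := by simp at hx; linarith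
      have hD : HasDerivAt (fun t : ℝ => Real.log t - (t - 1) * (3 - t) / 2)
          (1 / x - (((3 - x) + (x - 1) * (-1)) / 2)) x := by
        have h1 : HasDerivAt Real.log (1 / x) x := by
          simpa [one_div] using Real.hasDerivAt_log (ne_of_gt hx0)
        have h2 : HasDerivAt (fun t : ℝ => (t - 1) * (3 - t) / 2)
            (((3 - x) + (x - 1) * (-1)) / 2) x := by
          have := (((hasDerivAt_id x).sub_const 1).mul
            ((hasDerivAt_const x 3).sub (hasDerivAt_id x)))
          simpa using this.div_const 2
        exact h1.sub h2
      rw [hD.deriv]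
      have h3 : 1 / x - (((3 - x) + (x - 1) * (-1)) / 2) = (x - 1) ^ 2 / x := by
        field_simp; ring
      rw [h3]
      positivity
  have h := key (Set.mem_Ici.mpr le_rfl) (Set.mem_Ici.mpr ht) ht
  simp only [Real.log_one] at h
  linarith

theorem stmt14 (n : ℕ) (hn : 1 ≤ n) (c : ℝ) (hc : 0 ≤ c)
    (f : ℝ → ℝ)
    (hf : f = fun x => Real.exp (-(x - c) ^ 2 / 2) * x ^ (n - 1))
    (m : ℝ) (hm : m = (c + Real.sqrt (c ^ 2 + 4 * ((n : ℝ) - 1))) / 2) :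
    (∀ x > (0:ℝ), f x ≤ f m * Real.exp (-(x - m) ^ 2 / 2)) ∧
      (∀ x ≥ m, f m * Real.exp (-(x - m) ^ 2) ≤ f x) := by
  subst hf
  rcases eq_or_lt_of_le hn with h1 | h2
  · -- n = 1
    have hn1 : n = 1 := h1.symm
    subst hn1
    have hmc : m = c := by
      rw [hm]
      simp only [Nat.cast_one, sub_self, mul_zero, add_zero]
      rw [Real.sqrt_sq hc]; ring
    subst hmc
    constructor
    · intro x hx
      simp only [Nat.sub_self, pow_zero, mul_one, sub_self]
      rw [show -(0:ℝ) ^ 2 / 2 = 0 by ring, Real.exp_zero, one_mul]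
    · intro x hx
      simp only [Nat.sub_self, pow_zero, mul_one, sub_self]
      rw [show -(0:ℝ) ^ 2 / 2 = 0 by ring, Real.exp_zero, one_mul,
        Real.exp_le_exp]
      nlinarith [sq_nonneg (x - m)]
  · -- n ≥ 2
    set k : ℕ := n - 1 with hk
    set K : ℝ := (n : ℝ) - 1 with hK
    have hkK : (k : ℝ) = K := by
      rw [hk, hK]; push_cast [Nat.cast_sub hn]; ring
    have hK1 : 1 ≤ K := by
      rw [hK]
      have : (2 : ℝ) ≤ (n : ℝ) := by exact_mod_cast h2
      linarith
    have hargnn : 0 ≤ c ^ 2 + 4 * K := by positivity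
    have hs := Real.sq_sqrt hargnn
    have hsnn := Real.sqrt_nonneg (c ^ 2 + 4 * K)
    have hquad : m ^ 2 = c * m + K := by
      have h2m : 2 * m - c = Real.sqrt (c ^ 2 + 4 * K) := by rw [hm, hK]; ring
      nlinarith [hs]
    have hm0 : 0 < m := by nlinarith
    have hm1 : 1 ≤ m := by nlinarith
    have hKmc : K = m ^ 2 - c * m := by linarith
    constructor
    · -- upper bound
      intro x hx
      have hxm : 0 ≤ x / m := by positivity
      have hxk : x ^ k ≤ m ^ k * Real.exp (K * (x / m - 1)) := by
        have h := lemA (x / m) hxm k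
        rw [hkK] at h
        calc x ^ k = m ^ k * (x / m) ^ k := by
              rw [← mul_pow]; congr 1; field_simp
          _ ≤ m ^ k * Real.exp (K * (x / m - 1)) := by
              apply mul_le_mul_of_nonneg_left h (by positivity)
      have hexp : -(x - c) ^ 2 / 2 + K * (x / m - 1) = -(m - c) ^ 2 / 2 + -(x - m) ^ 2 / 2 := by
        rw [hKmc]
        field_simp
        ring
      calc Real.exp (-(x - c) ^ 2 / 2) * x ^ k
          ≤ Real.exp (-(x - c) ^ 2 / 2) * (m ^ k * Real.exp (K * (x / m - 1))) := by
            apply mul_le_mul_of_nonneg_left hxk (Real.exp_nonneg _)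
        _ = m ^ k * Real.exp (-(x - c) ^ 2 / 2 + K * (x / m - 1)) := by
            rw [Real.exp_add]; ring
        _ = Real.exp (-(m - c) ^ 2 / 2) * m ^ k * Real.exp (-(x - m) ^ 2 / 2) := by
            rw [hexp, Real.exp_add]; ring
    · -- lower bound
      intro x hx
      have hx0 : 0 < x := lt_of_lt_of_le hm0 hx
      set u : ℝ := x / m with hu
      have hu1 : 1 ≤ u := by rw [hu]; rw [le_div_iff₀ hm0]; linarith
      have hu0 : 0 < u := lt_of_lt_of_le one_pos hu1
      have hxu : x = m * u := by rw [hu]; field_simp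
      set L : ℝ := Real.log u with hL
      have hL1 : (u - 1) * (3 - u) / 2 ≤ L := lemB u hu1
      have hL2 : L ≤ u - 1 := Real.log_le_sub_one_of_pos hu0
      have hxk : x ^ k = m ^ k * Real.exp (K * L) := by
        rw [hxu, mul_pow]
        congr 1
        rw [← Real.exp_log hu0, ← Real.exp_nat_mul, hkK]
      have hKL : (x - c) ^ 2 / 2 - (m - c) ^ 2 / 2 - (x - m) ^ 2 ≤ K * L := by
        have e1 : m ^ 2 * ((u - 1) * (3 - u) / 2) ≤ m ^ 2 * L :=
          mul_le_mul_of_nonneg_left hL1 (by positivity)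
        have e2 : c * m * L ≤ c * m * (u - 1) :=
          mul_le_mul_of_nonneg_left hL2 (by positivity)
        have heq : (x - c) ^ 2 / 2 - (m - c) ^ 2 / 2 - (x - m) ^ 2
            = m ^ 2 * ((u - 1) * (3 - u) / 2) - c * m * (u - 1) := by
          rw [hxu]; ring
        rw [heq, hKmc]
        nlinarith [e1, e2]
      calc Real.exp (-(m - c) ^ 2 / 2) * m ^ k * Real.exp (-(x - m) ^ 2)
          = m ^ k * Real.exp (-(m - c) ^ 2 / 2 + -(x - m) ^ 2) := by
            rw [Real.exp_add]; ring
        _ ≤ m ^ k * Real.exp (-(x - c) ^ 2 / 2 + K * L) := by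
            apply mul_le_mul_of_nonneg_left _ (by positivity)
            rw [Real.exp_le_exp]
            linarith
        _ = Real.exp (-(x - c) ^ 2 / 2) * x ^ k := by
            rw [hxk, Real.exp_add]; ring
end

section
/- Let c ≥ 0 and n ≥ 1, and let μ be the probability measure on (0,∞) with density proportional to e^{-(x-c)²/2} x^{n-1}. Then any measurable set S ⊆ (0,∞) with μ(S) ≥ 0.9 contains two points whose ratio is at least 1 + 1/(6·max{c, √n}). -/
open Real MeasureTheory Set

lemma logOneAdd_ge (u : ℝ) (hu : 0 ≤ u) : u - u^2/2 ≤ Real.log (1+u) := by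
  have h : ∀ v ∈ Set.Ici (0:ℝ), HasDerivAt (fun w => Real.log (1+w) - w + w^2/2)
      (1/(1+v) - 1 + v) v := by
    intro v hv
    have hv' : (0:ℝ) < 1 + v := by simp at hv; linarith
    have h1 : HasDerivAt (fun w : ℝ => Real.log (1+w)) (1/(1+v)) v := by
      have := (Real.hasDerivAt_log hv'.ne').comp v (by simpa using (hasDerivAt_id v).const_add 1)
      simpa [one_div, Function.comp_def] using this
    have h2 : HasDerivAt (fun w : ℝ => w^2/2) v v := by
      have := (hasDerivAt_pow 2 v).div_const 2
      simpa using this.congr_deriv (by push_cast; ring)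
    exact (h1.sub (hasDerivAt_id v)).add h2
  have key : MonotoneOn (fun w => Real.log (1+w) - w + w^2/2) (Set.Ici (0:ℝ)) := by
    apply monotoneOn_of_deriv_nonneg (convex_Ici 0)
    · exact ContinuousOn.add (ContinuousOn.sub (Real.continuousOn_log.comp
        (by fun_prop) (fun v hv => by simp at hv ⊢; nlinarith)) continuousOn_id)
        (by fun_prop)
    · intro v hv
      rw [interior_Ici] at hv
      exact (h v (Set.mem_Ici.2 (le_of_lt (Set.mem_Ioi.1 hv)))).differentiableAt.differentiableWithinAt
    · intro v hv
      rw [interior_Ici] at hv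
      rw [(h v (Set.mem_Ici.2 (le_of_lt (Set.mem_Ioi.1 hv)))).deriv]
      have hv1 : (0:ℝ) < 1 + v := by simp at hv; linarith
      rw [show 1/(1+v) - 1 + v = v^2/(1+v) by field_simp; ring]
      positivity
  have h0 := key (Set.self_mem_Ici) (by exact hu) hu
  simp at h0
  nlinarith [h0]


lemma ptUpper (c m : ℝ) (k : ℕ) (hm0 : 0 ≤ m) (hmq : m^2 = c*m + k)
    (hk : (k = 0 ∧ m = c) ∨ 1 ≤ m) (x : ℝ) (hx : 0 < x) :
    Real.exp (-(x-c)^2/2) * x^k ≤ (Real.exp (-(m-c)^2/2) * m^k) * Real.exp (-(x-m)^2/2) := by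
  rcases hk with ⟨hk0, hmc⟩ | hm1
  · subst hk0 hmc
    simp [← Real.exp_add]
  · have hm : (0:ℝ) < m := lt_of_lt_of_le one_pos hm1
    have hxm : (0:ℝ) < x/m := by positivity
    have hlog : Real.log (x/m) ≤ x/m - 1 := Real.log_le_sub_one_of_pos hxm
    have hxk : x^k = m^k * Real.exp (k * Real.log (x/m)) := by
      rw [Real.exp_nat_mul, Real.exp_log hxm]
      rw [div_pow, mul_div_cancel₀]
      positivity
    rw [hxk]
    have e1 : Real.exp (-(x-c)^2/2) * (m ^ k * Real.exp (↑k * Real.log (x / m)))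
        = m^k * Real.exp (-(x-c)^2/2 + ↑k * Real.log (x / m)) := by
      rw [Real.exp_add]; ring
    have e2 : Real.exp (-(m-c)^2/2) * m^k * Real.exp (-(x-m)^2/2)
        = m^k * Real.exp (-(m-c)^2/2 + -(x-m)^2/2) := by
      rw [Real.exp_add]; ring
    rw [e1, e2]
    apply mul_le_mul_of_nonneg_left _ (by positivity)
    apply Real.exp_le_exp.2
    have hkm : (k:ℝ) * (x/m - 1) = (m-c)*(x-m) := by
      have hk' : (k:ℝ) = m^2 - c*m := by linarith
      rw [hk']; field_simp
    have : (k:ℝ) * Real.log (x/m) ≤ (k:ℝ) * (x/m - 1) :=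
      mul_le_mul_of_nonneg_left hlog (Nat.cast_nonneg k)
    nlinarith [this]

lemma ptLower (c m : ℝ) (hc : 0 ≤ c) (k : ℕ) (hm0 : 0 ≤ m) (hmq : m^2 = c*m + k)
    (hk : (k = 0 ∧ m = c) ∨ 1 ≤ m) (t : ℝ) (ht : 0 ≤ t) :
    (Real.exp (-(m-c)^2/2) * m^k) * Real.exp (-t^2) ≤ Real.exp (-(m+t-c)^2/2) * (m+t)^k := by
  rcases hk with ⟨hk0, hmc⟩ | hm1
  · subst hk0 hmc
    simp only [pow_zero, mul_one, sub_self]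
    rw [← Real.exp_add]
    apply Real.exp_le_exp.2
    nlinarith [sq_nonneg t]
  · have hm : (0:ℝ) < m := lt_of_lt_of_le one_pos hm1
    have hu : 0 ≤ t/m := by positivity
    have hlog : t/m - (t/m)^2/2 ≤ Real.log (1 + t/m) := logOneAdd_ge _ hu
    have hmt : m + t = m * (1 + t/m) := by field_simp
    have hxk : (m+t)^k = m^k * Real.exp (k * Real.log (1 + t/m)) := by
      rw [Real.exp_nat_mul, Real.exp_log (by positivity), hmt, mul_pow]
    rw [hxk]
    have e1 : Real.exp (-(m-c)^2/2) * m^k * Real.exp (-t^2)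
        = m^k * Real.exp (-(m-c)^2/2 + -t^2) := by rw [Real.exp_add]; ring
    have e2 : Real.exp (-(m+t-c)^2/2) * (m^k * Real.exp (↑k * Real.log (1 + t/m)))
        = m^k * Real.exp (-(m+t-c)^2/2 + ↑k * Real.log (1 + t/m)) := by
      rw [Real.exp_add]; ring
    rw [e1, e2]
    apply mul_le_mul_of_nonneg_left _ (by positivity)
    apply Real.exp_le_exp.2
    have hkm : (k:ℝ) * (t/m - (t/m)^2/2) = (m-c)*t - (1 - c/m)*t^2/2 := by
      have hk' : (k:ℝ) = m^2 - c*m := by linarith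
      rw [hk']; field_simp
    have h1 : (k:ℝ) * (t/m - (t/m)^2/2) ≤ (k:ℝ) * Real.log (1 + t/m) :=
      mul_le_mul_of_nonneg_left hlog (Nat.cast_nonneg k)
    have hcm : 0 ≤ c/m := by positivity
    nlinarith [h1, sq_nonneg t]

section
variable (c m : ℝ) (k : ℕ)

lemma gaussInt : Integrable (fun x : ℝ => Real.exp (-(m-c)^2/2) * m^k * Real.exp (-(x-m)^2/2)) := by
  have g1 : Integrable (fun x : ℝ => Real.exp (-(1/2) * (x - m)^2)) :=
    (integrable_exp_neg_mul_sq one_half_pos).comp_sub_right m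
  have : (fun x : ℝ => Real.exp (-(m-c)^2/2) * m^k * Real.exp (-(x-m)^2/2))
      = fun x => Real.exp (-(m-c)^2/2) * m^k * Real.exp (-(1/2) * (x-m)^2) := by
    funext x; ring_nf
  rw [this]
  exact g1.const_mul _

lemma gaussIntegral :
    ∫ x : ℝ, Real.exp (-(m-c)^2/2) * m^k * Real.exp (-(x-m)^2/2)
      = Real.exp (-(m-c)^2/2) * m^k * Real.sqrt (2*π) := by
  rw [integral_const_mul]
  congr 1
  have : (fun x : ℝ => Real.exp (-(x-m)^2/2)) = fun x => (fun y => Real.exp (-(1/2) * y^2)) (x - m) := by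
    funext x; ring_nf
  rw [this, integral_sub_right_eq_self (fun y => Real.exp (-(1/2) * y^2)) m, integral_gaussian]
  congr 1
  rw [div_div_eq_mul_div, div_one, mul_comm]

variable (hc : 0 ≤ c) (hm0 : 0 ≤ m) (hmq : m^2 = c*m + k)
   (hk : (k = 0 ∧ m = c) ∨ 1 ≤ m)

include hm0 hmq hk in
lemma integrableF : IntegrableOn (fun x => Real.exp (-(x-c)^2/2) * x^k) (Set.Ioi 0) := by
  apply Integrable.mono' ((gaussInt c m k).restrict (s := Set.Ioi 0))
  · exact (Continuous.aestronglyMeasurable (by fun_prop)).restrict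
  · rw [ae_restrict_iff' measurableSet_Ioi]
    apply ae_of_all
    intro x hx
    rw [Real.norm_eq_abs, abs_of_nonneg (mul_nonneg (Real.exp_pos _).le (pow_nonneg (le_of_lt hx) k))]
    exact ptUpper c m k hm0 hmq hk x hx

include hm0 hmq hk in
lemma Zle : ∫ x in Set.Ioi (0:ℝ), Real.exp (-(x-c)^2/2) * x^k
    ≤ Real.exp (-(m-c)^2/2) * m^k * Real.sqrt (2*π) := by
  rw [← gaussIntegral c m k]
  calc ∫ x in Set.Ioi (0:ℝ), Real.exp (-(x-c)^2/2) * x^k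
      ≤ ∫ x in Set.Ioi (0:ℝ), Real.exp (-(m-c)^2/2) * m^k * Real.exp (-(x-m)^2/2) := by
        apply setIntegral_mono_on (integrableF c m k hm0 hmq hk)
          ((gaussInt c m k).integrableOn) measurableSet_Ioi
        intro x hx
        exact ptUpper c m k hm0 hmq hk x hx
    _ ≤ ∫ x : ℝ, Real.exp (-(m-c)^2/2) * m^k * Real.exp (-(x-m)^2/2) := by
        apply setIntegral_le_integral (gaussInt c m k)
        apply ae_of_all
        intro x
        positivity

include hc hm0 hmq hk in
lemma I1bound : (Real.exp (-(m-c)^2/2) * m^k) * (26/81)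
    ≤ ∫ x in Set.Ioc m (m+1/3), Real.exp (-(x-c)^2/2) * x^k := by
  have hsub : Set.Ioc m (m+1/3) ⊆ Set.Ioi (0:ℝ) := fun x hx => lt_of_le_of_lt hm0 hx.1
  have hpoly : IntegrableOn (fun x => (Real.exp (-(m-c)^2/2) * m^k) * (1 - (x-m)^2))
      (Set.Ioc m (m+1/3)) := by
    exact (Continuous.integrableOn_Icc (by fun_prop)).mono_set Set.Ioc_subset_Icc_self
  calc (Real.exp (-(m-c)^2/2) * m^k) * (26/81)
      = ∫ x in Set.Ioc m (m+1/3), (Real.exp (-(m-c)^2/2) * m^k) * (1 - (x-m)^2) := by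
        rw [← intervalIntegral.integral_of_le (by linarith : m ≤ m + 1/3),
          intervalIntegral.integral_const_mul]
        have : (∫ x in m..(m+1/3), (1 - (x-m)^2))
            = ∫ x in (m-m)..(m+1/3-m), (1 - x^2) := by
          exact intervalIntegral.integral_comp_sub_right (fun x => 1 - x^2) m
        rw [this]
        have h0 : m - m = 0 := by ring
        have h13 : m + 1/3 - m = 1/3 := by ring
        rw [h0, h13]
        rw [intervalIntegral.integral_sub intervalIntegrable_const
          (intervalIntegral.intervalIntegrable_pow 2), intervalIntegral.integral_const,
          integral_pow]
        norm_num
    _ ≤ ∫ x in Set.Ioc m (m+1/3), Real.exp (-(x-c)^2/2) * x^k := by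
        apply setIntegral_mono_on hpoly
          (((integrableF c m k hm0 hmq hk)).mono_set hsub) measurableSet_Ioc
        intro x hx
        have ht : 0 ≤ x - m := by linarith [hx.1.le]
        have h1 : (1 : ℝ) - (x-m)^2 ≤ Real.exp (-(x-m)^2) := by
          have := Real.add_one_le_exp (-(x-m)^2); linarith
        have h2 := ptLower c m hc k hm0 hmq hk (x-m) ht
        rw [show m + (x - m) = x by ring] at h2
        have h3 : (Real.exp (-(m-c)^2/2) * m^k) * (1 - (x-m)^2)
            ≤ (Real.exp (-(m-c)^2/2) * m^k) * Real.exp (-(x-m)^2) := by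
          apply mul_le_mul_of_nonneg_left h1 (by positivity)
        linarith

include hc hm0 hmq hk in
lemma I2bound : (Real.exp (-(m-c)^2/2) * m^k) *
      (∑ i ∈ Finset.range 11, (1/6 : ℝ) * (143/144)^(4*(5+i)^2))
    ≤ ∫ x in Set.Ici (m + 2/3), Real.exp (-(x-c)^2/2) * x^k := by
  set fm := Real.exp (-(m-c)^2/2) * m^k with hfm
  have hfm0 : 0 < fm := by
    rcases hk with ⟨hk0, _⟩ | hm1
    · subst hk0; positivity
    · have : (0:ℝ) < m := lt_of_lt_of_le one_pos hm1
      positivity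
  set a : ℕ → ℝ := fun i => m + 2/3 + i/6 with ha
  have hIciSub : Set.Ici (m + 2/3) ⊆ Set.Ioi (0:ℝ) := fun x hx => by
    simp only [Set.mem_Ici] at hx; simp only [Set.mem_Ioi]; linarith
  have hintF := integrableF c m k hm0 hmq hk
  have hpieces : ∀ i, i < 11 → IntervalIntegrable
      (fun x => Real.exp (-(x-c)^2/2) * x^k) volume (a i) (a (i+1)) := by
    intro i _
    have hle : a i ≤ a (i+1) := by simp only [ha]; push_cast; linarith
    rw [intervalIntegrable_iff_integrableOn_Ioc_of_le hle]
    apply hintF.mono_set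
    intro x hx
    simp only [Set.mem_Ioc, ha] at hx
    simp only [Set.mem_Ioi]
    have : (0:ℝ) ≤ (i:ℝ) := Nat.cast_nonneg i
    linarith [hx.1]
  have hsum := intervalIntegral.sum_integral_adjacent_intervals (μ := volume)
      (f := fun x => Real.exp (-(x-c)^2/2) * x^k) (a := a) (n := 11) hpieces
  have hpc : ∀ i, i < 11 → (1/6 : ℝ) * (fm * (143/144)^(4*(5+i)^2))
      ≤ ∫ x in (a i)..(a (i+1)), Real.exp (-(x-c)^2/2) * x^k := by
    intro i hi
    have hle : a i ≤ a (i+1) := by simp only [ha]; push_cast; linarith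
    have hconst : (1/6 : ℝ) * (fm * (143/144)^(4*(5+i)^2))
        = ∫ _x in (a i)..(a (i+1)), (fm * (143/144 : ℝ)^(4*(5+i)^2)) := by
      rw [intervalIntegral.integral_const, smul_eq_mul]
      congr 1
      simp only [ha]; push_cast; ring
    rw [hconst]
    apply intervalIntegral.integral_mono_on hle
      (intervalIntegrable_const) (hpieces i hi)
    intro x hx
    simp only [Set.mem_Icc, ha] at hx
    push_cast at hx
    have hi0 : (0:ℝ) ≤ (i:ℝ) := Nat.cast_nonneg i
    have hxm0 : 0 ≤ x - m := by linarith [hx.1]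
    have hxmu : x - m ≤ (5+i)/6 := by linarith [hx.2]
    -- (143/144)^p ≤ exp(-(x-m)^2)
    have e1 : ((143:ℝ)/144)^(4*(5+i)^2) ≤ Real.exp (-(1:ℝ)/144)^(4*(5+i)^2) := by
      apply pow_le_pow_left₀ (by norm_num)
      have := Real.add_one_le_exp (-(1:ℝ)/144); linarith
    have e2 : Real.exp (-(1:ℝ)/144)^(4*(5+i)^2) = Real.exp (-(((5+i:ℕ):ℝ)/6)^2) := by
      rw [← Real.exp_nat_mul]
      congr 1
      push_cast; ring
    have e3 : Real.exp (-(((5+i:ℕ):ℝ)/6)^2) ≤ Real.exp (-(x-m)^2) := by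
      apply Real.exp_le_exp.2
      have : (x-m)^2 ≤ (((5+i:ℕ):ℝ)/6)^2 := by
        apply sq_le_sq' _ _
        · push_cast; linarith
        · push_cast; linarith
      linarith
    have h2 := ptLower c m hc k hm0 hmq hk (x-m) hxm0
    rw [show m + (x - m) = x by ring] at h2
    calc fm * (143/144 : ℝ)^(4*(5+i)^2)
        ≤ fm * Real.exp (-(x-m)^2) := by
          apply mul_le_mul_of_nonneg_left _ hfm0.le
          calc ((143:ℝ)/144)^(4*(5+i)^2) ≤ Real.exp (-(1:ℝ)/144)^(4*(5+i)^2) := e1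
            _ = Real.exp (-(((5+i:ℕ):ℝ)/6)^2) := e2
            _ ≤ Real.exp (-(x-m)^2) := e3
      _ ≤ Real.exp (-(x-c)^2/2) * x^k := h2
  calc fm * (∑ i ∈ Finset.range 11, (1/6 : ℝ) * (143/144)^(4*(5+i)^2))
      = ∑ i ∈ Finset.range 11, (1/6 : ℝ) * (fm * (143/144)^(4*(5+i)^2)) := by
        rw [Finset.mul_sum]; congr 1; funext i; ring
    _ ≤ ∑ i ∈ Finset.range 11, ∫ x in (a i)..(a (i+1)), Real.exp (-(x-c)^2/2) * x^k := by
        apply Finset.sum_le_sum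
        intro i hi
        exact hpc i (Finset.mem_range.1 hi)
    _ = ∫ x in (a 0)..(a 11), Real.exp (-(x-c)^2/2) * x^k := hsum
    _ = ∫ x in Set.Ioc (a 0) (a 11), Real.exp (-(x-c)^2/2) * x^k := by
        rw [intervalIntegral.integral_of_le (by simp only [ha]; push_cast; linarith)]
    _ ≤ ∫ x in Set.Ici (m + 2/3), Real.exp (-(x-c)^2/2) * x^k := by
        apply setIntegral_mono_set (hintF.mono_set hIciSub)
        · filter_upwards [ae_restrict_mem measurableSet_Ici] with x hx
          simp only [Set.mem_Ici] at hx
          have hx0 : (0:ℝ) < x := by linarith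
          exact mul_nonneg (Real.exp_pos _).le (pow_nonneg hx0.le k)
        · apply HasSubset.Subset.eventuallyLE
          intro x hx
          simp only [Set.mem_Ioc, ha] at hx
          simp only [Set.mem_Ici]
          linarith [hx.1.le]
end


set_option maxHeartbeats 1000000 in
open MeasureTheory in
theorem stmt15 (n : ℕ) (hn : 1 ≤ n) (c : ℝ) (hc : 0 ≤ c)
    (μ : Measure ℝ)
    (hμ : μ = (volume.restrict (Set.Ioi (0:ℝ))).withDensity
      (fun x => ENNReal.ofReal
        (Real.exp (-(x - c) ^ 2 / 2) * x ^ (n - 1)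
          / ∫ y in Set.Ioi (0:ℝ), Real.exp (-(y - c) ^ 2 / 2) * y ^ (n - 1))))
    (S : Set ℝ) (hS : MeasurableSet S) (hSsub : S ⊆ Set.Ioi 0)
    (hprob : (9 / 10 : ENNReal) ≤ μ S) :
    ∃ a ∈ S, ∃ b ∈ S,
      1 + 1 / (6 * max c (Real.sqrt n)) ≤ b / a := by
  set k : ℕ := n - 1 with hkdef
  set Z : ℝ := ∫ y in Set.Ioi (0:ℝ), Real.exp (-(y - c) ^ 2 / 2) * y ^ (n - 1) with hZdef
  set K : ℝ := (k : ℝ) with hKdef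
  set m : ℝ := (c + Real.sqrt (c^2 + 4*K))/2 with hmdef
  have hK0 : 0 ≤ K := Nat.cast_nonneg k
  have hsq : Real.sqrt (c^2 + 4*K) ^ 2 = c^2 + 4*K := Real.sq_sqrt (by positivity)
  have hsnn : 0 ≤ Real.sqrt (c^2 + 4*K) := Real.sqrt_nonneg _
  have hm0 : 0 ≤ m := by rw [hmdef]; positivity
  have hmq : m^2 = c*m + K := by rw [hmdef]; nlinarith [hsq]
  have hkor : (k = 0 ∧ m = c) ∨ 1 ≤ m := by
    rcases Nat.eq_zero_or_pos k with h0 | hpos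
    · left
      refine ⟨h0, ?_⟩
      have hK : K = 0 := by rw [hKdef, h0]; norm_num
      rw [hmdef, hK]
      rw [show c^2 + 4*0 = c^2 by ring, Real.sqrt_sq hc]
      ring
    · right
      have hK1 : (1:ℝ) ≤ K := by rw [hKdef]; exact_mod_cast hpos
      have h4 : (2:ℝ) ≤ Real.sqrt (c^2 + 4*K) := by
        rw [show (2:ℝ) = Real.sqrt 4 by rw [show (4:ℝ) = 2^2 by norm_num, Real.sqrt_sq]; norm_num]
        exact Real.sqrt_le_sqrt (by nlinarith)
      rw [hmdef]; linarith
  have hF := integrableF c m k hm0 hmq hkor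
  have hZleq := Zle c m k hm0 hmq hkor
  have hI1 := I1bound c m k hc hm0 hmq hkor
  have hI2 := I2bound c m k hc hm0 hmq hkor
  set fm : ℝ := Real.exp (-(m-c)^2/2) * m^k with hfmdef
  set qsum : ℝ := ∑ i ∈ Finset.range 11, (1/6 : ℝ) * (143/144)^(4*(5+i)^2) with hqdef
  have hfm0 : 0 < fm := by
    rw [hfmdef]
    rcases hkor with ⟨hk0, _⟩ | hm1
    · rw [hk0]; positivity
    · have : (0:ℝ) < m := lt_of_lt_of_le one_pos hm1
      positivity
  have hq0 : 0 < qsum := by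
    rw [hqdef]
    apply Finset.sum_pos (fun i _ => by positivity) ⟨0, by norm_num⟩
  have hqnum : (6.2831854:ℝ) < 100 * qsum^2 := by
    rw [hqdef]
    simp only [Finset.sum_range_succ, Finset.sum_range_zero, pow_mul]
    norm_num
  clear_value fm qsum
  have h2pib : Real.sqrt (2*π) < 10 * qsum := by
    rw [Real.sqrt_lt' (by positivity)]
    have h1 : 2*π < 6.2831854 := by nlinarith [Real.pi_lt_d20]
    nlinarith [hqnum]
  clear hqnum hqdef hfmdef
  have hI1sub : Set.Ioc m (m+1/3) ⊆ Set.Ioi (0:ℝ) := fun x hx => lt_of_le_of_lt hm0 hx.1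
  have hI2sub : Set.Ici (m+2/3) ⊆ Set.Ioi (0:ℝ) := fun x hx => by
    simp only [Set.mem_Ici] at hx; simp only [Set.mem_Ioi]; linarith
  have hfnonneg : ∀ x : ℝ, x ∈ Set.Ioi (0:ℝ) → 0 ≤ Real.exp (-(x-c)^2/2) * x^k :=
    fun x hx => mul_nonneg (Real.exp_pos _).le (pow_nonneg (le_of_lt hx) k)
  have hZpos : 0 < Z := by
    have h1 : (∫ x in Set.Ioc m (m+1/3), Real.exp (-(x-c)^2/2) * x^k) ≤ Z := by
      rw [hZdef]
      apply setIntegral_mono_set hF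
      · filter_upwards [ae_restrict_mem measurableSet_Ioi] with x hx
        exact hfnonneg x hx
      · exact HasSubset.Subset.eventuallyLE hI1sub
    linarith [mul_pos hfm0 (by norm_num : (0:ℝ) < 26/81)]
  -- measure formula
  have hμapp : ∀ A : Set ℝ, MeasurableSet A → A ⊆ Set.Ioi 0 →
      μ A = ENNReal.ofReal ((∫ x in A, Real.exp (-(x - c)^2/2) * x^(n-1)) / Z) := by
    intro A hA hAsub
    rw [hμ, withDensity_apply _ hA, Measure.restrict_restrict hA,
      Set.inter_eq_self_of_subset_left hAsub]
    rw [← ofReal_integral_eq_lintegral_ofReal (((hF.mono_set hAsub)).div_const Z)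
      (by filter_upwards [ae_restrict_mem hA] with x hx
          exact div_nonneg (hfnonneg x (hAsub hx)) hZpos.le)]
    rw [integral_div]
  have hμuniv : μ Set.univ = 1 := by
    rw [hμ, withDensity_apply _ MeasurableSet.univ, Measure.restrict_univ]
    rw [← ofReal_integral_eq_lintegral_ofReal (hF.div_const Z)
      (by filter_upwards [ae_restrict_mem measurableSet_Ioi] with x hx
          exact div_nonneg (hfnonneg x hx) hZpos.le)]
    rw [integral_div, ← hZdef, div_self hZpos.ne', ENNReal.ofReal_one]
  -- generic intersection lemma
  have hinter : ∀ I : Set ℝ, MeasurableSet I → I ⊆ Set.Ioi 0 →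
      ((1:ℝ)/10 < (∫ x in I, Real.exp (-(x - c)^2/2) * x^(n-1)) / Z) → (S ∩ I).Nonempty := by
    intro I hI hIsub hIval
    have hμI : (1/10 : ENNReal) < μ I := by
      rw [hμapp I hI hIsub]
      rw [show (1/10 : ENNReal) = ENNReal.ofReal (1/10) by
        rw [ENNReal.ofReal_div_of_pos (by norm_num)]; norm_num]
      exact (ENNReal.ofReal_lt_ofReal_iff (lt_trans (by norm_num) hIval)).2 hIval
    apply nonempty_of_measure_ne_zero (μ := μ)
    intro h0
    have hun := measure_union_add_inter S hI (μ := μ)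
    rw [h0, add_zero] at hun
    have hle1 : μ (S ∪ I) ≤ 1 := by
      rw [← hμuniv]; exact measure_mono (Set.subset_univ _)
    have hgt1 : (1:ENNReal) < μ S + μ I := by
      have he : (9/10 : ENNReal) + 1/10 = 1 := by
        rw [ENNReal.div_add_div_same]
        norm_num
        rw [ENNReal.div_self (by norm_num) (by norm_num)]
      calc (1:ENNReal) = 9/10 + 1/10 := he.symm
        _ < μ S + μ I := ENNReal.add_lt_add_of_le_of_lt
            ((ENNReal.div_lt_top (by norm_num) (by norm_num)).ne) hprob hμI
    rw [← hun] at hgt1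
    exact absurd hle1 (not_le.2 hgt1)
  -- sqrt(2π) bounds
  have h2pia : Real.sqrt (2*π) < 10 * ((26:ℝ)/81) := by
    rw [show (10:ℝ) * (26/81) = 260/81 by norm_num]
    rw [Real.sqrt_lt' (by norm_num)]
    nlinarith [Real.pi_lt_d2]
  -- apply to the two intervals
  have hA1 : (S ∩ Set.Ioc m (m+1/3)).Nonempty := by
    apply hinter _ measurableSet_Ioc hI1sub
    rw [lt_div_iff₀ hZpos]
    calc (1:ℝ)/10 * Z ≤ 1/10 * (fm * Real.sqrt (2*π)) := by
          apply mul_le_mul_of_nonneg_left _ (by norm_num)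
          exact hZleq
      _ = fm * (Real.sqrt (2*π)/10) := by ring
      _ < fm * (26/81) := by
          apply mul_lt_mul_of_pos_left _ hfm0
          linarith [h2pia]
      _ ≤ _ := hI1
  have hA2 : (S ∩ Set.Ici (m+2/3)).Nonempty := by
    apply hinter _ measurableSet_Ici hI2sub
    rw [lt_div_iff₀ hZpos]
    calc (1:ℝ)/10 * Z ≤ 1/10 * (fm * Real.sqrt (2*π)) := by
          apply mul_le_mul_of_nonneg_left _ (by norm_num)
          exact hZleq
      _ = fm * (Real.sqrt (2*π)/10) := by ring
      _ < fm * qsum := by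
          apply mul_lt_mul_of_pos_left _ hfm0
          linarith [h2pib]
      _ ≤ _ := hI2
  obtain ⟨a, haS, haI⟩ := hA1
  obtain ⟨b, hbS, hbI⟩ := hA2
  refine ⟨a, haS, b, hbS, ?_⟩
  simp only [Set.mem_Ioc] at haI
  simp only [Set.mem_Ici] at hbI
  -- ratio arithmetic
  clear_value Z
  clear hZdef hμ hμapp hμuniv hinter hF hZleq hI1 hI2 hq0 h2pib h2pia hZpos hprob
  set M : ℝ := max c (Real.sqrt n) with hMdef
  have hcM : c ≤ M := le_max_left _ _
  have hnM : Real.sqrt n ≤ M := le_max_right _ _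
  have hM1 : 1 ≤ M := by
    refine le_trans ?_ hnM
    rw [show (1:ℝ) = Real.sqrt 1 by simp]
    exact Real.sqrt_le_sqrt (by exact_mod_cast hn)
  have hnM2 : (n:ℝ) ≤ M^2 := by
    have h1 := mul_self_le_mul_self (Real.sqrt_nonneg (n:ℝ)) hnM
    rw [Real.mul_self_sqrt (by positivity)] at h1
    rw [pow_two]
    exact h1
  have hKn : K ≤ (n:ℝ) := by
    rw [hKdef, hkdef]
    exact_mod_cast Nat.sub_le n 1
  have hsle : Real.sqrt (c^2 + 4*K) ≤ (7/3)*M := by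
    have h1 : Real.sqrt (c^2 + 4*K) ≤ Real.sqrt (((7/3)*M)^2) :=
      Real.sqrt_le_sqrt (by nlinarith [hnM2, hKn, mul_self_le_mul_self hc hcM, hM1])
    rwa [Real.sqrt_sq (by positivity)] at h1
  have h3m : 3*m + 1 ≤ 6*M := by
    rw [hmdef]; linarith
  have ha0 : 0 < a := lt_of_le_of_lt hm0 haI.1
  calc 1 + 1 / (6 * M) ≤ 1 + 1 / (3*m + 1) := by
        have := one_div_le_one_div_of_le (by linarith : (0:ℝ) < 3*m+1) h3m
        linarith
    _ = (m + 2/3)/(m + 1/3) := by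
        have h1 : (3*m+1:ℝ) ≠ 0 := by linarith
        have h2 : (m+1/3:ℝ) ≠ 0 := by linarith
        field_simp
        ring
    _ ≤ b / a := by
        apply div_le_div₀ (by linarith) hbI ha0 haI.2
end
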